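/- arXiv:2405.17565 — 4 statements merged into one kernel-verified Lean document; each statement's English description precedes it below -/
import Mathlib

section
/- Let L, M ⊆ (Z/d)^{2n} be Lagrangian subspaces and g ∈ L*, h ∈ M* linear functionals. Then the Hilbert-Schmidt inner product of the corresponding stabilizer states is tr(Π_L^g Π_M^h) = d^{dim(L∩M) − n} if g and h agree on L ∩ M, and 0 otherwise. -/
open Matrix

/-- The phase space `(ℤ/d)^{2n}` as pairs `(a_X, a_Z)`. -/
abbrev PS (d n : ℕ) := (Fin n → ZMod d) × (Fin n → ZMod d)

/-- `ω = exp(2πi/d)`. -/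
noncomputable def omegaC (d : ℕ) : ℂ := Complex.exp (2 * Real.pi * Complex.I / d)

/-- `ω^k` for an exponent `k : ℤ/d`. -/
noncomputable def chi (d : ℕ) (k : ZMod d) : ℂ := omegaC d ^ k.val

/-- Dot product over `ℤ/d`. -/
def dotZ {d n : ℕ} (x y : Fin n → ZMod d) : ZMod d := ∑ i, x i * y i

/-- The standard symplectic form `[a,b] = a_X·b_Z − b_X·a_Z`. -/
def symp {d n : ℕ} (a b : PS d n) : ZMod d := dotZ a.1 b.2 - dotZ b.1 a.2

/-- The Weyl-Heisenberg operator `T(a) = τ^{-a_X·a_Z} ⨂ᵢ Z^{(a_Z)_i} X^{(a_X)_i}`,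
where `τ = ω^{(d+1)/2} = ω^{2⁻¹ mod d}` for odd `d`. -/
noncomputable def WH (d n : ℕ) (a : PS d n) :
    Matrix (Fin n → ZMod d) (Fin n → ZMod d) ℂ :=
  Matrix.of fun q q' =>
    if q = q' + a.1 then chi d ((2⁻¹ : ZMod d) * (-(dotZ a.1 a.2)) + dotZ a.2 q) else 0

/-- An isotropic subspace of dimension `n`, i.e. a Lagrangian subspace. -/
def IsLagrangian (d n : ℕ) (L : Submodule (ZMod d) (PS d n)) : Prop :=
  (∀ a ∈ L, ∀ b ∈ L, symp a b = 0) ∧ Module.finrank (ZMod d) L = n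

/-- The stabilizer projection `Π_L^g = d^{-n} Σ_{b∈L} ω^{g(b)} T(b)`. -/
noncomputable def stabProj (d n : ℕ) [Fact d.Prime]
    (L : Submodule (ZMod d) (PS d n)) (g : L →ₗ[ZMod d] ZMod d) :
    Matrix (Fin n → ZMod d) (Fin n → ZMod d) ℂ :=
  letI : Fintype L := Fintype.ofFinite L
  ((d : ℂ) ^ n)⁻¹ • ∑ b : L, chi d (g b) • WH d n (b : PS d n)


section Aux

variable {d : ℕ} [Fact d.Prime]

lemma d_ne_zero' : d ≠ 0 := (Fact.out : d.Prime).ne_zero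

lemma omega_prim : IsPrimitiveRoot (omegaC d) d := Complex.isPrimitiveRoot_exp d d_ne_zero'

lemma omega_pow_mod (m : ℕ) : omegaC d ^ (m % d) = omegaC d ^ m := by
  conv_rhs => rw [← Nat.mod_add_div m d]
  rw [pow_add, pow_mul, (omega_prim (d := d)).pow_eq_one, one_pow, mul_one]

lemma chi_zero : chi d 0 = 1 := by
  haveI : NeZero d := ⟨d_ne_zero'⟩; simp [chi]

lemma chi_add (x y : ZMod d) : chi d (x + y) = chi d x * chi d y := by
  haveI : NeZero d := ⟨d_ne_zero'⟩
  rw [chi, chi, chi, ZMod.val_add, omega_pow_mod, pow_add]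

lemma chi_ne_one {x : ZMod d} (hx : x ≠ 0) : chi d x ≠ 1 := by
  haveI : NeZero d := ⟨d_ne_zero'⟩
  rw [chi]; intro hc
  have hdvd := ((omega_prim (d := d)).pow_eq_one_iff_dvd _).mp hc
  exact (fun h => hx (by rwa [ZMod.val_eq_zero] at h)) (Nat.eq_zero_of_dvd_of_lt hdvd (ZMod.val_lt x))

/-- character-sum over a finite module with a nonzero "linear functional" vanishes -/
lemma sum_chi_module {V : Type*} [AddCommGroup V] [Fintype V] (φ : V → ZMod d)
    (hadd : ∀ x y, φ (x + y) = φ x + φ y) (x0 : V) (h0 : φ x0 ≠ 0) :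
    ∑ x : V, chi d (φ x) = 0 := by
  have key : ∑ x : V, chi d (φ x) = ∑ x : V, chi d (φ (x + x0)) :=
    (Fintype.sum_bijective (· + x0) (Equiv.addRight x0).bijective _ _ (fun x => rfl)).symm
  have h1 : ∑ x : V, chi d (φ x) = (∑ x : V, chi d (φ x)) * chi d (φ x0) :=
    key.trans ((Finset.sum_congr rfl fun x _ => by rw [hadd, chi_add]).trans
      (Finset.sum_mul _ _ _).symm)
  have h2 : (∑ x : V, chi d (φ x)) * (chi d (φ x0) - 1) = 0 := by
    rw [mul_sub, mul_one, ← h1, sub_self]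
  rcases mul_eq_zero.mp h2 with h | h
  · exact h
  · exact absurd (by linear_combination h) (chi_ne_one h0)

lemma sum_chi (c : ZMod d) : ∑ t : ZMod d, chi d (c * t) = if c = 0 then (d : ℂ) else 0 := by
  split_ifs with hc
  · subst hc; simp [chi_zero, ZMod.card]
  · exact sum_chi_module (fun t => c * t) (fun x y => mul_add c x y) 1 (by simpa using hc)

open Finset in
lemma sum_chi_pi {n : ℕ} (c : Fin n → ZMod d) :
    ∑ q : Fin n → ZMod d, chi d (dotZ c q) = if c = 0 then (d : ℂ) ^ n else 0 := by
  classical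
  have h1 : ∀ q : Fin n → ZMod d, chi d (dotZ c q) = ∏ i, chi d (c i * q i) := by
    intro q
    rw [dotZ]
    induction (univ : Finset (Fin n)) using Finset.cons_induction with
    | empty => simp [chi_zero]
    | cons a s ha ih => rw [Finset.sum_cons, Finset.prod_cons, chi_add, ih]
  simp only [h1]
  rw [← Fintype.piFinset_univ, ← Finset.prod_univ_sum
    (fun _ : Fin n => (Finset.univ : Finset (ZMod d))) (fun i j => chi d (c i * j))]
  simp only [sum_chi]
  split_ifs with hc
  · simp [funext_iff.mp hc]
  · obtain ⟨i, hi⟩ : ∃ i, c i ≠ 0 := by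
      by_contra hco; push_neg at hco; exact hc (funext hco)
    exact Finset.prod_eq_zero (Finset.mem_univ i) (by simp [hi])

lemma dotZ_add_left {n : ℕ} (x y z : Fin n → ZMod d) :
    dotZ (x + y) z = dotZ x z + dotZ y z := by
  simp [dotZ, add_mul, Finset.sum_add_distrib]

lemma dotZ_add_right {n : ℕ} (x y z : Fin n → ZMod d) :
    dotZ x (y + z) = dotZ x y + dotZ x z := by
  simp [dotZ, mul_add, Finset.sum_add_distrib]

omit [Fact d.Prime] in
lemma dotZ_comm {n : ℕ} (x y : Fin n → ZMod d) : dotZ x y = dotZ y x := by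
  simp [dotZ, mul_comm]

set_option linter.unusedSectionVars false in
lemma dotZ_neg_neg {n : ℕ} (x y : Fin n → ZMod d) : dotZ (-x) (-y) = dotZ x y := by
  simp [dotZ]

lemma twoNeZeroZMod (hodd : Odd d) : (2 : ZMod d) ≠ 0 := by
  haveI : NeZero d := ⟨d_ne_zero'⟩
  rw [show ((2 : ZMod d)) = ((2 : ℕ) : ZMod d) by norm_cast, Ne,
    ZMod.natCast_eq_zero_iff]
  intro hdvd
  have := (Nat.prime_dvd_prime_iff_eq Fact.out Nat.prime_two).mp hdvd
  subst this
  simp [Nat.odd_iff] at hodd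

open Finset in
lemma trace_WH_mul (hodd : Odd d) {n : ℕ} (a b : PS d n) :
    (WH d n a * WH d n b).trace = if b = -a then (d : ℂ) ^ n else 0 := by
  classical
  rw [Matrix.trace]
  simp only [Matrix.diag, Matrix.mul_apply, WH, Matrix.of_apply]
  have inner : ∀ q : Fin n → ZMod d,
      (∑ q' : Fin n → ZMod d,
        (if q = q' + a.1 then chi d ((2⁻¹ : ZMod d) * (-(dotZ a.1 a.2)) + dotZ a.2 q) else 0) *
        (if q' = q + b.1 then chi d ((2⁻¹ : ZMod d) * (-(dotZ b.1 b.2)) + dotZ b.2 q') else 0)) =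
      (if q = q + b.1 + a.1 then
        chi d ((2⁻¹ : ZMod d) * (-(dotZ a.1 a.2)) + dotZ a.2 q) *
        chi d ((2⁻¹ : ZMod d) * (-(dotZ b.1 b.2)) + dotZ b.2 (q + b.1)) else 0) := by
    intro q
    rw [Finset.sum_eq_single (q + b.1)]
    · simp [ite_mul]
    · intro q' _ hne; simp [hne]
    · simp
  simp only [inner]
  have hcond : ∀ q : Fin n → ZMod d, (q = q + b.1 + a.1) ↔ (b.1 + a.1 = 0) := by
    intro q; rw [add_assoc, left_eq_add]
  by_cases h1 : b.1 + a.1 = 0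
  · have htrue : ∀ q : Fin n → ZMod d, (q = q + b.1 + a.1) = True := by
      intro q; simp [hcond q, h1]
    simp only [htrue, if_true]
    set C : ZMod d := (2⁻¹ : ZMod d) * (-(dotZ a.1 a.2)) +
        ((2⁻¹ : ZMod d) * (-(dotZ b.1 b.2)) + dotZ b.2 b.1) with hC
    have hcomb : ∀ q : Fin n → ZMod d,
        chi d ((2⁻¹ : ZMod d) * (-(dotZ a.1 a.2)) + dotZ a.2 q) *
        chi d ((2⁻¹ : ZMod d) * (-(dotZ b.1 b.2)) + dotZ b.2 (q + b.1)) =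
        chi d C * chi d (dotZ (a.2 + b.2) q) := by
      intro q
      rw [← chi_add, ← chi_add]
      congr 1
      rw [hC, dotZ_add_right, dotZ_add_left]
      ring
    simp only [hcomb]
    rw [← Finset.mul_sum, sum_chi_pi]
    by_cases h2 : a.2 + b.2 = 0
    · have hb1 : b.1 = -a.1 := eq_neg_of_add_eq_zero_left h1
      have hb2 : b.2 = -a.2 := eq_neg_of_add_eq_zero_right h2
      have hba : b = -a := Prod.ext hb1 hb2
      rw [if_pos h2, if_pos hba]
      have hCzero : C = 0 := by
        rw [hC, hb1, hb2, dotZ_neg_neg, dotZ_neg_neg, dotZ_comm a.2 a.1]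
        have h2i : (2 : ZMod d) * 2⁻¹ = 1 := mul_inv_cancel₀ (twoNeZeroZMod hodd)
        linear_combination (-(dotZ a.1 a.2)) * h2i
      rw [hCzero, chi_zero, one_mul]
    · rw [if_neg h2, if_neg (fun hba => h2 (by rw [hba]; simp)), mul_zero]
  · have hzero : ∀ q : Fin n → ZMod d, (q = q + b.1 + a.1) = False := by
      intro q; simp [hcond q, h1]
    simp only [hzero, if_false, Finset.sum_const_zero]
    rw [if_neg (fun hba => h1 (by rw [hba]; simp))]

end Aux

-- Overlap formula for stabilizer states:
-- `tr(Π_L^g Π_M^h) = d^{dim(L∩M) − n}` if `g` and `h` agree on `L ∩ M`, else `0`.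
open scoped Classical in
theorem stabProj_overlap (d n : ℕ) [Fact d.Prime] (hodd : Odd d)
    (L M : Submodule (ZMod d) (PS d n))
    (hL : IsLagrangian d n L) (hM : IsLagrangian d n M)
    (g : L →ₗ[ZMod d] ZMod d) (h : M →ₗ[ZMod d] ZMod d) :
    (stabProj d n L g * stabProj d n M h).trace =
      if ∀ (b : PS d n) (hbL : b ∈ L) (hbM : b ∈ M), g ⟨b, hbL⟩ = h ⟨b, hbM⟩ then
        (d : ℂ) ^ (Module.finrank (ZMod d) ↥(L ⊓ M)) / (d : ℂ) ^ n
      else 0 := by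
  letI : Fintype L := Fintype.ofFinite L
  letI : Fintype M := Fintype.ofFinite M
  letI : Fintype ↥(L ⊓ M) := Fintype.ofFinite _
  have hd0 : (d : ℂ) ≠ 0 := Nat.cast_ne_zero.mpr (Fact.out : d.Prime).ne_zero
  -- Step 1: expand the trace
  have expand : (stabProj d n L g * stabProj d n M h).trace =
      ((d : ℂ) ^ n)⁻¹ * ((d : ℂ) ^ n)⁻¹ *
        ∑ a : L, ∑ b : M, chi d (g a) * chi d (h b) *
          (if (b : PS d n) = -(a : PS d n) then (d : ℂ) ^ n else 0) := by
    rw [stabProj, stabProj]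
    rw [Matrix.smul_mul, Matrix.mul_smul, Matrix.trace_smul, Matrix.trace_smul,
      smul_eq_mul, smul_eq_mul, ← mul_assoc]
    congr 1
    rw [Matrix.sum_mul, Matrix.trace_sum]
    refine Finset.sum_congr rfl fun a _ => ?_
    rw [Matrix.mul_sum, Matrix.trace_sum]
    refine Finset.sum_congr rfl fun b _ => ?_
    rw [Matrix.smul_mul, Matrix.mul_smul, Matrix.trace_smul, Matrix.trace_smul,
      smul_eq_mul, smul_eq_mul, trace_WH_mul hodd, ← mul_assoc]
  rw [expand]
  -- Step 2: collapse the double sum to a sum over L ⊓ M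
  have collapse : (∑ a : L, ∑ b : M, chi d (g a) * chi d (h b) *
      (if (b : PS d n) = -(a : PS d n) then (d : ℂ) ^ n else 0)) =
      ∑ x : ↥(L ⊓ M), chi d (g ⟨(x : PS d n), x.2.1⟩ - h ⟨(x : PS d n), x.2.2⟩) * (d : ℂ) ^ n := by
    rw [← Finset.sum_product']
    have hrw : ∀ p : L × M, chi d (g p.1) * chi d (h p.2) *
        (if (p.2 : PS d n) = -(p.1 : PS d n) then (d : ℂ) ^ n else 0) =
        if (p.2 : PS d n) = -(p.1 : PS d n) then chi d (g p.1) * chi d (h p.2) * (d : ℂ) ^ n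
        else 0 := by
      intro p; split_ifs <;> simp
    simp only [hrw]
    rw [← Finset.sum_filter]
    refine Finset.sum_bij'
      (fun p hp => (⟨(p.1 : PS d n), ⟨p.1.2, ?memM⟩⟩ : ↥(L ⊓ M)))
      (fun x _ => (⟨⟨(x : PS d n), x.2.1⟩, ⟨-(x : PS d n), (L ⊓ M).neg_mem x.2 |>.2⟩⟩ : L × M))
      ?_ ?_ ?_ ?_ ?_
    case memM =>
      have hp' := (Finset.mem_filter.mp hp).2
      have : -(p.1 : PS d n) ∈ M := hp' ▸ p.2.2
      simpa using M.neg_mem this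
    · intro a ha; exact Finset.mem_univ _
    · intro x hx
      exact Finset.mem_filter.mpr ⟨Finset.mem_univ _, rfl⟩
    · intro a ha
      have hc : (a.2 : PS d n) = -(a.1 : PS d n) := (Finset.mem_filter.mp ha).2
      refine Prod.ext (Subtype.ext rfl) (Subtype.ext ?_)
      simp [hc]
    · intro x hx
      exact Subtype.ext rfl
    · intro a ha
      have hc : (a.2 : PS d n) = -(a.1 : PS d n) := (Finset.mem_filter.mp ha).2
      congr 1
      have e2 : a.2 = -(⟨(a.1 : PS d n), by
          have hm : -(a.1 : PS d n) ∈ M := hc ▸ a.2.2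
          simpa using M.neg_mem hm⟩ : M) := Subtype.ext (by simp [hc])
      rw [congrArg h e2, map_neg, sub_eq_add_neg, chi_add]
  rw [collapse]
  -- Step 3: evaluate the character sum over L ⊓ M
  have hφadd : ∀ x y : ↥(L ⊓ M),
      (g ⟨((x + y : ↥(L ⊓ M)) : PS d n), (x + y).2.1⟩ - h ⟨((x + y : ↥(L ⊓ M)) : PS d n), (x + y).2.2⟩) =
      (g ⟨(x : PS d n), x.2.1⟩ - h ⟨(x : PS d n), x.2.2⟩) +
      (g ⟨(y : PS d n), y.2.1⟩ - h ⟨(y : PS d n), y.2.2⟩) := by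
    intro x y
    have e1 : (⟨((x + y : ↥(L ⊓ M)) : PS d n), (x + y).2.1⟩ : L) =
        ⟨(x : PS d n), x.2.1⟩ + ⟨(y : PS d n), y.2.1⟩ := Subtype.ext rfl
    have e2 : (⟨((x + y : ↥(L ⊓ M)) : PS d n), (x + y).2.2⟩ : M) =
        ⟨(x : PS d n), x.2.2⟩ + ⟨(y : PS d n), y.2.2⟩ := Subtype.ext rfl
    rw [e1, e2, map_add, map_add]
    ring
  by_cases hP : ∀ (b : PS d n) (hbL : b ∈ L) (hbM : b ∈ M), g ⟨b, hbL⟩ = h ⟨b, hbM⟩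
  · rw [if_pos hP]
    have h0 : ∀ x : ↥(L ⊓ M),
        g ⟨(x : PS d n), x.2.1⟩ - h ⟨(x : PS d n), x.2.2⟩ = 0 := by
      intro x; rw [sub_eq_zero]; exact hP _ x.2.1 x.2.2
    simp only [h0, chi_zero, one_mul]
    rw [Finset.sum_const, Finset.card_univ, nsmul_eq_mul]
    have hcard : (Fintype.card ↥(L ⊓ M) : ℂ) =
        (d : ℂ) ^ (Module.finrank (ZMod d) ↥(L ⊓ M)) := by
      rw [Module.card_eq_pow_finrank (K := ZMod d) (V := ↥(L ⊓ M)), ZMod.card]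
      push_cast; ring
    rw [hcard]
    field_simp
  · rw [if_neg hP]
    push_neg at hP
    obtain ⟨b, hbL, hbM, hne⟩ := hP
    rw [← Finset.sum_mul]
    rw [sum_chi_module
      (fun x : ↥(L ⊓ M) => g ⟨(x : PS d n), x.2.1⟩ - h ⟨(x : PS d n), x.2.2⟩)
      hφadd ⟨b, ⟨hbL, hbM⟩⟩ (sub_ne_zero.mpr hne), zero_mul, mul_zero]
end

section
/- For any linear map R on (Z/d)^{2n} (d prime, n ≥ 1), if R is invertible and maps Lagrangian subspaces to Lagrangian subspaces, then R preserves symplectic orthogonality: [a,b] = 0 iff [Ra, Rb] = 0; hence R is a symplectic similitude. -/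
open Matrix

section helpers
variable {d n : ℕ}

lemma symp_add_left (a a' b : PS d n) : symp (a + a') b = symp a b + symp a' b := by
  simp [symp, dotZ, add_mul, mul_add, Finset.sum_add_distrib]; ring

lemma symp_smul_left (c : ZMod d) (a b : PS d n) : symp (c • a) b = c * symp a b := by
  simp [symp, dotZ, Finset.mul_sum, mul_sub, mul_assoc, mul_left_comm]

lemma symp_add_right (a b b' : PS d n) : symp a (b + b') = symp a b + symp a b' := by
  simp [symp, dotZ, add_mul, mul_add, Finset.sum_add_distrib]; ring

lemma symp_smul_right (c : ZMod d) (a b : PS d n) : symp a (c • b) = c * symp a b := by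
  simp [symp, dotZ, Finset.mul_sum, mul_sub, mul_assoc, mul_left_comm]

lemma symp_self (a : PS d n) : symp a a = 0 := sub_self _

lemma symp_skew (a b : PS d n) : symp a b = - symp b a := by simp [symp]

lemma dotZ_single (x : Fin n → ZMod d) (i : Fin n) : dotZ x (Pi.single i 1) = x i := by
  simp [dotZ, Pi.single_apply, Finset.sum_ite_eq]

noncomputable def sympB (d n : ℕ) : LinearMap.BilinForm (ZMod d) (PS d n) :=
  LinearMap.mk₂ (ZMod d) symp symp_add_left symp_smul_left symp_add_right symp_smul_right

@[simp] lemma sympB_apply (a b : PS d n) : sympB d n a b = symp a b := rfl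

end helpers

section field
variable {d n : ℕ} [Fact d.Prime]
open Module

lemma sympB_nondeg : (sympB d n).Nondegenerate := by
  refine (LinearMap.IsRefl.nondegenerate_iff_separatingLeft (B := sympB d n)
    (fun a b h => by have := symp_skew (d := d) b a; simp_all)).mpr ?_
  intro a ha
  have h1 : a.1 = 0 := by
    funext i
    have := ha (0, Pi.single i 1)
    simp only [sympB_apply] at this
    simpa [symp, dotZ, Pi.single_apply, mul_ite, Finset.sum_ite_eq'] using this
  have h2 : a.2 = 0 := by
    funext i
    have := ha (Pi.single i 1, 0)
    simp only [sympB_apply] at this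
    simpa [symp, dotZ, Pi.single_apply, ite_mul, Finset.sum_ite_eq'] using this
  exact Prod.ext h1 h2

lemma sympB_refl : (sympB d n).IsRefl := by
  intro a b h
  have := symp_skew (d := d) b a
  simp_all

lemma finrank_PS : finrank (ZMod d) (PS d n) = 2 * n := by
  simp [PS, Module.finrank_prod]; ring

lemma isotropic_finrank_le (W : Submodule (ZMod d) (PS d n))
    (hW : ∀ a ∈ W, ∀ b ∈ W, symp a b = 0) : finrank (ZMod d) W ≤ n := by
  have hle : W ≤ (sympB d n).orthogonal W := by
    intro m hm x hx
    exact hW x hx m hm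
  have h1 := Submodule.finrank_mono hle
  have h2 := LinearMap.BilinForm.finrank_orthogonal (B := sympB d n) sympB_nondeg W
  rw [finrank_PS] at h2
  have h3 : finrank (ZMod d) W ≤ finrank (ZMod d) (PS d n) := Submodule.finrank_le W
  rw [finrank_PS] at h3
  omega

lemma isotropic_extend (W : Submodule (ZMod d) (PS d n))
    (hW : ∀ a ∈ W, ∀ b ∈ W, symp a b = 0) (hlt : finrank (ZMod d) W < n) :
    ∃ W' : Submodule (ZMod d) (PS d n), W < W' ∧ ∀ a ∈ W', ∀ b ∈ W', symp a b = 0 := by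
  have h2 := LinearMap.BilinForm.finrank_orthogonal (B := sympB d n) sympB_nondeg W
  rw [finrank_PS] at h2
  have hnle : ¬ (sympB d n).orthogonal W ≤ W := by
    intro hle
    have := Submodule.finrank_mono hle
    omega
  obtain ⟨v, hv, hvW⟩ := Set.not_subset.mp hnle
  refine ⟨W ⊔ Submodule.span (ZMod d) {v}, ?_, ?_⟩
  · refine lt_of_le_of_ne le_sup_left ?_
    intro h
    exact hvW (h ▸ Submodule.mem_sup_right (Submodule.mem_span_singleton_self v))
  · intro a ha b hb
    obtain ⟨w, hw, z, hz, rfl⟩ := Submodule.mem_sup.mp ha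
    obtain ⟨w', hw', z', hz', rfl⟩ := Submodule.mem_sup.mp hb
    obtain ⟨c, rfl⟩ := Submodule.mem_span_singleton.mp hz
    obtain ⟨c', rfl⟩ := Submodule.mem_span_singleton.mp hz'
    have hwv : ∀ x ∈ W, symp x v = 0 := fun x hx => hv x hx
    have h4 : symp v w' = 0 := by rw [symp_skew, hwv w' hw']; simp
    simp only [symp_add_left, symp_add_right, symp_smul_left, symp_smul_right, symp_self,
      hW w hw w' hw', hwv w hw, hwv w' hw', h4, mul_zero, add_zero, zero_add]

lemma exists_lagrangian_aux : ∀ k (W : Submodule (ZMod d) (PS d n)),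
    n - finrank (ZMod d) W ≤ k → (∀ a ∈ W, ∀ b ∈ W, symp a b = 0) →
    ∃ L, W ≤ L ∧ IsLagrangian d n L := by
  intro k
  induction k with
  | zero =>
    intro W hk hW
    have := isotropic_finrank_le W hW
    exact ⟨W, le_rfl, hW, by omega⟩
  | succ k ih =>
    intro W hk hW
    have hle := isotropic_finrank_le W hW
    rcases eq_or_lt_of_le hle with heq | hlt
    · exact ⟨W, le_rfl, hW, heq⟩
    · obtain ⟨W', hWW', hW'⟩ := isotropic_extend W hW hlt
      have hr : finrank (ZMod d) W < finrank (ZMod d) W' :=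
        Submodule.finrank_lt_finrank_of_lt hWW'
      obtain ⟨L, hL1, hL2⟩ := ih W' (by omega) hW'
      exact ⟨L, le_trans hWW'.le hL1, hL2⟩

lemma exists_lagrangian_pair (a b : PS d n) (hab : symp a b = 0) :
    ∃ L, a ∈ L ∧ b ∈ L ∧ IsLagrangian d n L := by
  have hba : symp b a = 0 := by rw [symp_skew, hab, neg_zero]
  have hW : ∀ x ∈ Submodule.span (ZMod d) {a, b}, ∀ y ∈ Submodule.span (ZMod d) {a, b},
      symp x y = 0 := by
    intro x hx y hy
    obtain ⟨c1, c2, rfl⟩ := Submodule.mem_span_pair.mp hx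
    obtain ⟨e1, e2, rfl⟩ := Submodule.mem_span_pair.mp hy
    simp only [symp_add_left, symp_add_right, symp_smul_left, symp_smul_right,
      symp_self, hab, hba, mul_zero, add_zero, zero_add]
  obtain ⟨L, hL1, hL2⟩ := exists_lagrangian_aux (n - finrank (ZMod d) (Submodule.span (ZMod d) {a, b})) _ le_rfl hW
  refine ⟨L, hL1 ?_, hL1 ?_, hL2⟩
  · exact Submodule.subset_span (by simp)
  · exact Submodule.subset_span (by simp)

end field


/-- If an invertible linear map `R` on `(ℤ/d)^{2n}` maps Lagrangian subspaces to
Lagrangian subspaces, then it preserves symplectic orthogonality, and hence is a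
symplectic similitude. -/
theorem lagrangian_preserving_is_similitude (d n : ℕ) [Fact d.Prime] (hn : 1 ≤ n)
    (R : PS d n →ₗ[ZMod d] PS d n) (hbij : Function.Bijective R)
    (hLag : ∀ L : Submodule (ZMod d) (PS d n),
      IsLagrangian d n L → IsLagrangian d n (L.map R)) :
    (∀ a b : PS d n, symp a b = 0 ↔ symp (R a) (R b) = 0) ∧
    ∃ α : ZMod d, α ≠ 0 ∧ ∀ a b : PS d n, symp (R a) (R b) = α * symp a b := by
  classical
  have fwd : ∀ (S : PS d n →ₗ[ZMod d] PS d n),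
      (∀ L, IsLagrangian d n L → IsLagrangian d n (L.map S)) →
      ∀ a b, symp a b = 0 → symp (S a) (S b) = 0 := by
    intro S hS a b hab
    obtain ⟨L, haL, hbL, hL⟩ := exists_lagrangian_pair a b hab
    exact (hS L hL).1 (S a) (Submodule.mem_map_of_mem haL) (S b) (Submodule.mem_map_of_mem hbL)
  haveI : NeZero d := ⟨(Fact.out : d.Prime).ne_zero⟩
  haveI : Finite (Submodule (ZMod d) (PS d n)) :=
    Finite.of_injective (fun L => (L : Set (PS d n))) SetLike.coe_injective
  set e := LinearEquiv.ofBijective R hbij with he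
  have heR : ∀ x, e x = R x := fun _ => rfl
  have hmapR : ∀ L : Submodule (ZMod d) (PS d n), L.map e.toLinearMap = L.map R := fun _ => rfl
  have hinj : Function.Injective
      (fun L : {L : Submodule (ZMod d) (PS d n) // IsLagrangian d n L} =>
        (⟨L.1.map R, hLag _ L.2⟩ : {L // IsLagrangian d n L})) := by
    intro L1 L2 h
    have h' : L1.1.map R = L2.1.map R := congrArg Subtype.val h
    exact Subtype.ext (Submodule.map_injective_of_injective hbij.1 h')
  have hsurj := Finite.injective_iff_surjective.mp hinj
  have hLagInv : ∀ L, IsLagrangian d n L →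
      IsLagrangian d n (L.map e.symm.toLinearMap) := by
    intro L hL
    obtain ⟨⟨L', hL'⟩, hmap⟩ := hsurj ⟨L, hL⟩
    have h1 : L'.map R = L := congrArg Subtype.val hmap
    have h2 : L.map e.symm.toLinearMap = L' := by
      rw [← h1, ← hmapR, ← Submodule.map_comp]
      simp
    rw [h2]; exact hL'
  have bwd : ∀ a b : PS d n, symp (R a) (R b) = 0 → symp a b = 0 := by
    intro a b h
    have := fwd e.symm.toLinearMap hLagInv (R a) (R b) h
    simpa [← heR, LinearEquiv.symm_apply_apply] using this
  have P : ∀ a b : PS d n, symp a b = 0 ↔ symp (R a) (R b) = 0 :=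
    fun a b => ⟨fwd R hLag a b, bwd a b⟩
  refine ⟨P, ?_⟩
  -- Step A : varying the right argument
  have stepA : ∀ a b b' : PS d n,
      symp a b' * symp (R a) (R b) = symp a b * symp (R a) (R b') := by
    intro a b b'
    have h0 : symp a ((symp a b') • b + (-(symp a b)) • b') = 0 := by
      simp only [symp_add_right, symp_smul_right]; ring
    have h1 := fwd R hLag a _ h0
    rw [map_add, LinearMap.map_smul, LinearMap.map_smul] at h1
    simp only [symp_add_right, symp_smul_right] at h1
    linear_combination h1
  have stepA' : ∀ a a' b : PS d n,
      symp a' b * symp (R a) (R b) = symp a b * symp (R a') (R b) := by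
    intro a a' b
    have h0 : symp ((symp a' b) • a + (-(symp a b)) • a') b = 0 := by
      simp only [symp_add_left, symp_smul_left]; ring
    have h1 := fwd R hLag _ b h0
    rw [map_add, LinearMap.map_smul, LinearMap.map_smul] at h1
    simp only [symp_add_left, symp_smul_left] at h1
    linear_combination h1
  -- nondegeneracy in function form
  have nondeg : ∀ a : PS d n, a ≠ 0 → ∃ u, symp a u ≠ 0 := by
    intro a ha
    by_contra hc
    push_neg at hc
    exact ha (sympB_nondeg.1 a (fun u => hc u))
  have ratio : ∀ a b a' b' : PS d n, symp a b ≠ 0 → symp a' b' ≠ 0 →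
      symp (R a) (R b) * symp a' b' = symp (R a') (R b') * symp a b := by
    intro a b a' b' h h'
    have ha : a ≠ 0 := by rintro rfl; exact h (by simp [symp, dotZ])
    have ha' : a' ≠ 0 := by rintro rfl; exact h' (by simp [symp, dotZ])
    obtain ⟨u, hu⟩ := nondeg a ha
    obtain ⟨v, hv⟩ := nondeg a' ha'
    obtain ⟨w, hw1, hw2⟩ : ∃ w, symp a w ≠ 0 ∧ symp a' w ≠ 0 := by
      by_cases h1 : symp a' u ≠ 0
      · exact ⟨u, hu, h1⟩
      by_cases h2 : symp a v ≠ 0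
      · exact ⟨v, h2, hv⟩
      push_neg at h1 h2
      refine ⟨u + v, ?_, ?_⟩
      · rw [symp_add_right, h2, add_zero]; exact hu
      · rw [symp_add_right, h1, zero_add]; exact hv
    have e1 := stepA a b w
    have e2 := stepA' a a' w
    have e3 := stepA a' b' w
    have key : (symp (R a) (R b) * symp a' b') * (symp a w * symp a' w) =
        (symp (R a') (R b') * symp a b) * (symp a w * symp a' w) := by
      linear_combination (symp a' b' * symp a' w) * e1 + (symp a b * symp a' b') * e2
        - (symp a b * symp a w) * e3
    exact mul_right_cancel₀ (mul_ne_zero hw1 hw2) key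
  -- hyperbolic pair
  set i0 : Fin n := ⟨0, hn⟩
  set e0 : PS d n := (Pi.single i0 1, 0) with he0
  set f0 : PS d n := (0, Pi.single i0 1) with hf0
  have hef : symp e0 f0 = 1 := by
    show dotZ (Pi.single i0 1) (Pi.single i0 1) - dotZ 0 (0 : Fin n → ZMod d) = 1
    rw [dotZ_single]
    simp [dotZ]
  refine ⟨symp (R e0) (R f0), ?_, ?_⟩
  · intro h0
    have : symp e0 f0 = 0 := (P e0 f0).mpr h0
    rw [hef] at this
    exact one_ne_zero this
  · intro a b
    by_cases hab : symp a b = 0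
    · rw [hab, mul_zero]
      exact (P a b).mp hab
    · have := ratio a b e0 f0 hab (by rw [hef]; exact one_ne_zero)
      rw [hef, mul_one] at this
      exact this
end

section
/- Let Q be a subset of Hermitian operators on a finite-dimensional Hilbert space. Every bijection of Q that extends to a map on conv(Q) commuting with convex combinations extends further to a map on aff(Q) commuting with affine combinations. Hence the Kadison symmetry group of Q equals its affine symmetry group. -/
open Matrix

/-- Kadison symmetries are affine symmetries: a bijection of a set `Q` of Hermitian
operators that extends to the convex hull commuting with convex combinations extends
further to a map commuting with affine combinations, agreeing with the original one
on the convex hull. -/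
theorem kadison_eq_affine {m : ℕ} (Q : Set (Matrix (Fin m) (Fin m) ℂ))
    (hQ : ∀ A ∈ Q, A.IsHermitian)
    (K : Matrix (Fin m) (Fin m) ℂ → Matrix (Fin m) (Fin m) ℂ)
    (hbij : Set.BijOn K Q Q)
    (hconv : ∀ (k : ℕ) (q : Fin k → Matrix (Fin m) (Fin m) ℂ) (p : Fin k → ℝ),
      (∀ i, q i ∈ Q) → (∀ i, 0 ≤ p i) → ∑ i, p i = 1 →
      K (∑ i, p i • q i) = ∑ i, p i • K (q i)) :
    ∃ Λ : Matrix (Fin m) (Fin m) ℂ → Matrix (Fin m) (Fin m) ℂ,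
      Set.EqOn Λ K (convexHull ℝ Q) ∧
      ∀ (k : ℕ) (q : Fin k → Matrix (Fin m) (Fin m) ℂ) (α : Fin k → ℝ),
        (∀ i, q i ∈ Q) → ∑ i, α i = 1 →
        Λ (∑ i, α i • q i) = ∑ i, α i • Λ (q i) := by
  classical
  -- Key lemma: a vanishing affine-type combination maps to a vanishing combination.
  have lemA : ∀ (n : ℕ) (s : Fin n → Matrix (Fin m) (Fin m) ℂ) (γ : Fin n → ℝ),
      (∀ i, s i ∈ Q) →
      ∑ i, γ i = 0 → ∑ i, γ i • s i = 0 → ∑ i, γ i • K (s i) = 0 := by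
    intro n s γ hs hγ0 hγs
    set t : ℝ := ∑ i, max (γ i) 0 with ht
    have htn : 0 ≤ t := Finset.sum_nonneg fun i _ => le_max_right _ _
    have hsplit : ∀ i, γ i = max (γ i) 0 - max (-γ i) 0 := fun i =>
      (max_zero_sub_max_neg_zero_eq_self (γ i)).symm
    have hneg : ∑ i, max (-γ i) 0 = t := by
      have h : ∑ i, (max (γ i) 0 - max (-γ i) 0) = 0 := by
        simp_rw [← hsplit]; exact hγ0
      rw [Finset.sum_sub_distrib] at h
      rw [ht]; linarith
    rcases eq_or_lt_of_le htn with h0 | hpos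
    · -- all coefficients are zero
      have hz : ∀ i, γ i = 0 := by
        intro i
        have h1 : max (γ i) 0 = 0 :=
          (Finset.sum_eq_zero_iff_of_nonneg
            (fun i _ => le_max_right (γ i) 0)).mp h0.symm i (Finset.mem_univ i)
        have h2 : max (-γ i) 0 = 0 :=
          (Finset.sum_eq_zero_iff_of_nonneg
            (fun i _ => le_max_right (-γ i) 0)).mp (hneg.trans h0.symm) i (Finset.mem_univ i)
        rw [hsplit i, h1, h2, sub_zero]
      simp [hz]
    · -- normalize and use `hconv`
      set p : Fin n → ℝ := fun i => max (γ i) 0 / t with hp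
      set p' : Fin n → ℝ := fun i => max (-γ i) 0 / t with hp'
      have hp0 : ∀ i, 0 ≤ p i := fun i => div_nonneg (le_max_right _ _) htn
      have hp'0 : ∀ i, 0 ≤ p' i := fun i => div_nonneg (le_max_right _ _) htn
      have hps : ∑ i, p i = 1 := by
        rw [hp]; rw [← Finset.sum_div, ← ht, div_self (ne_of_gt hpos)]
      have hp's : ∑ i, p' i = 1 := by
        rw [hp']; rw [← Finset.sum_div, hneg, div_self (ne_of_gt hpos)]
      have hdiff : ∀ (f : Fin n → Matrix (Fin m) (Fin m) ℂ),
          ∑ i, p i • f i - ∑ i, p' i • f i = t⁻¹ • ∑ i, γ i • f i := by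
        intro f
        rw [Finset.smul_sum, ← Finset.sum_sub_distrib]
        refine Finset.sum_congr rfl fun i _ => ?_
        rw [← sub_smul, smul_smul]
        congr 1
        rw [hp, hp', div_sub_div_same, ← hsplit i, div_eq_inv_mul]
      have heqpt : ∑ i, p i • s i = ∑ i, p' i • s i := by
        have h := hdiff s
        rw [hγs, smul_zero] at h
        exact sub_eq_zero.mp h
      have h1 := hconv n s p hs hp0 hps
      have h2 := hconv n s p' hs hp'0 hp's
      rw [heqpt, h2] at h1
      have h3 := hdiff (fun i => K (s i))
      rw [sub_eq_zero.mpr h1.symm] at h3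
      have h4 := congrArg (fun x : Matrix (Fin m) (Fin m) ℂ => t • x) h3.symm
      simpa [smul_smul, mul_inv_cancel₀ (ne_of_gt hpos)] using h4
  -- Well-definedness: two affine representations give the same image combination.
  have lemB : ∀ (k : ℕ) (q : Fin k → Matrix (Fin m) (Fin m) ℂ) (α : Fin k → ℝ)
      (l : ℕ) (r : Fin l → Matrix (Fin m) (Fin m) ℂ) (β : Fin l → ℝ),
      (∀ i, q i ∈ Q) → (∀ i, r i ∈ Q) → ∑ i, α i = 1 → ∑ i, β i = 1 →
      ∑ i, α i • q i = ∑ i, β i • r i →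
      ∑ i, α i • K (q i) = ∑ i, β i • K (r i) := by
    intro k q α l r β hq hr hα hβ heq
    have key := lemA (k + l) (Fin.append q r) (Fin.append α (fun i => -β i))
      (fun i => i.addCases (fun j => by rw [Fin.append_left]; exact hq j)
        (fun j => by rw [Fin.append_right]; exact hr j))
      (by
        rw [Fin.sum_univ_add]
        simp only [Fin.append_left, Fin.append_right]
        rw [Finset.sum_neg_distrib, hα, hβ]
        ring)
      (by
        rw [Fin.sum_univ_add]
        simp only [Fin.append_left, Fin.append_right, neg_smul]
        rw [Finset.sum_neg_distrib, heq]
        simp)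
    rw [Fin.sum_univ_add] at key
    simp only [Fin.append_left, Fin.append_right, neg_smul] at key
    rw [Finset.sum_neg_distrib] at key
    exact eq_of_sub_eq_zero (by rw [sub_eq_add_neg]; exact key)
  -- Existence of an affine representation
  let P : Matrix (Fin m) (Fin m) ℂ → Prop := fun x =>
    ∃ (k : ℕ) (q : Fin k → Matrix (Fin m) (Fin m) ℂ) (α : Fin k → ℝ),
      (∀ i, q i ∈ Q) ∧ ∑ i, α i = 1 ∧ x = ∑ i, α i • q i
  let Λ : Matrix (Fin m) (Fin m) ℂ → Matrix (Fin m) (Fin m) ℂ := fun x =>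
    if h : P x then
      ∑ i, h.choose_spec.choose_spec.choose i • K (h.choose_spec.choose i)
    else K x
  have hΛ : ∀ (x : Matrix (Fin m) (Fin m) ℂ) (k : ℕ)
      (q : Fin k → Matrix (Fin m) (Fin m) ℂ) (α : Fin k → ℝ),
      (∀ i, q i ∈ Q) → ∑ i, α i = 1 → x = ∑ i, α i • q i →
      Λ x = ∑ i, α i • K (q i) := by
    intro x k q α hq hα hx
    have hP : P x := ⟨k, q, α, hq, hα, hx⟩
    simp only [Λ, dif_pos hP]
    obtain ⟨hq', hα', hx'⟩ := hP.choose_spec.choose_spec.choose_spec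
    exact lemB _ _ _ _ _ _ hq' hq hα' hα (hx'.symm.trans hx)
  refine ⟨Λ, ?_, ?_⟩
  · -- agreement with K on the convex hull
    intro x hx
    rw [mem_convexHull_iff_exists_fintype] at hx
    obtain ⟨ι, hι, w, z, hw0, hw1, hz, hxe⟩ := hx
    let e := (Fintype.equivFin ι).symm
    have hw1' : ∑ i, w (e i) = 1 := by
      rw [Equiv.sum_comp e w]; exact hw1
    have hxe' : x = ∑ i, w (e i) • z (e i) := by
      rw [Equiv.sum_comp e (fun i => w i • z i)]; exact hxe.symm
    rw [hΛ x _ (fun i => z (e i)) (fun i => w (e i)) (fun i => hz _) hw1' hxe']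
    rw [← hconv _ (fun i => z (e i)) (fun i => w (e i)) (fun i => hz _) (fun i => hw0 _) hw1',
      ← hxe']
  · -- affine combinations
    intro k q α hq hα
    have hΛq : ∀ i, Λ (q i) = K (q i) := by
      intro i
      rw [hΛ (q i) 1 (fun _ => q i) (fun _ => (1:ℝ)) (fun _ => hq i) (by simp) (by simp)]
      simp
    rw [hΛ _ k q α hq hα rfl]
    exact Finset.sum_congr rfl fun i _ => by rw [hΛq i]
end

section
/- Let Q be a finite set of Hermitian operators on a finite-dimensional Hilbert space, and let W : Q → Q be a bijection preserving the Hilbert-Schmidt inner product: tr(W(q₁)W(q₂)) = tr(q₁q₂) for all q₁, q₂ ∈ Q. Then W extends to a linear map on span(Q), i.e., every Wigner symmetry is a linear symmetry. -/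
open Matrix

/-- A Hermitian matrix whose squared trace vanishes is zero. -/
lemma herm_trace_sq_eq_zero {m : ℕ} {D : Matrix (Fin m) (Fin m) ℂ}
    (hD : D.IsHermitian) (h : (D * D).trace = 0) : D = 0 := by
  have key : (D * D).trace = ((∑ i, ∑ j, Complex.normSq (D i j) : ℝ) : ℂ) := by
    rw [Matrix.trace]
    push_cast
    refine Finset.sum_congr rfl fun i _ => ?_
    rw [Matrix.diag_apply, Matrix.mul_apply]
    refine Finset.sum_congr rfl fun j _ => ?_
    rw [← hD.apply i j]
    simp [Matrix.conjTranspose_apply, RCLike.star_def, Complex.normSq_eq_conj_mul_self]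
  rw [key] at h
  have hsum : (∑ i, ∑ j, Complex.normSq (D i j) : ℝ) = 0 := by exact_mod_cast h
  ext i j
  have hij : Complex.normSq (D i j) = 0 := by
    have h1 : ∀ i ∈ (Finset.univ : Finset (Fin m)),
        0 ≤ ∑ j, Complex.normSq (D i j) :=
      fun i _ => Finset.sum_nonneg fun j _ => Complex.normSq_nonneg _
    have h2 := (Finset.sum_eq_zero_iff_of_nonneg h1).mp hsum i (Finset.mem_univ i)
    have h3 : ∀ j ∈ (Finset.univ : Finset (Fin m)),
        0 ≤ Complex.normSq (D i j) := fun j _ => Complex.normSq_nonneg _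
    exact (Finset.sum_eq_zero_iff_of_nonneg h3).mp h2 j (Finset.mem_univ j)
  simpa using Complex.normSq_eq_zero.mp hij

/-- Traces of products of `W`-images of linear combinations agree with the originals. -/
lemma trace_sum_sq_eq {m : ℕ} (Q : Set (Matrix (Fin m) (Fin m) ℂ))
    (W : Matrix (Fin m) (Fin m) ℂ → Matrix (Fin m) (Fin m) ℂ)
    (hW : ∀ q₁ ∈ Q, ∀ q₂ ∈ Q, (W q₁ * W q₂).trace = (q₁ * q₂).trace)
    (t : Finset (Matrix (Fin m) (Fin m) ℂ)) (ht : ↑t ⊆ Q)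
    (g : Matrix (Fin m) (Fin m) ℂ → ℝ) :
    ((∑ x ∈ t, g x • W x) * (∑ y ∈ t, g y • W y)).trace
      = ((∑ x ∈ t, g x • x) * (∑ y ∈ t, g y • y)).trace := by
  rw [Finset.sum_mul_sum, Finset.sum_mul_sum, Matrix.trace_sum, Matrix.trace_sum]
  refine Finset.sum_congr rfl fun x hx => ?_
  rw [Matrix.trace_sum, Matrix.trace_sum]
  refine Finset.sum_congr rfl fun y hy => ?_
  rw [smul_mul_assoc, mul_smul_comm, smul_mul_assoc, mul_smul_comm,
    Matrix.trace_smul, Matrix.trace_smul, Matrix.trace_smul, Matrix.trace_smul,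
    hW x (ht hx) y (ht hy)]

/-- Every Wigner symmetry of a finite set of Hermitian operators (a bijection of `Q`
preserving the Hilbert-Schmidt inner product) extends to a linear map on `span(Q)`. -/
theorem wigner_subset_linear {m : ℕ} (Q : Set (Matrix (Fin m) (Fin m) ℂ))
    (hfin : Q.Finite) (hQ : ∀ A ∈ Q, A.IsHermitian)
    (W : Matrix (Fin m) (Fin m) ℂ → Matrix (Fin m) (Fin m) ℂ)
    (hbij : Set.BijOn W Q Q)
    (hW : ∀ q₁ ∈ Q, ∀ q₂ ∈ Q, (W q₁ * W q₂).trace = (q₁ * q₂).trace) :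
    ∃ L : Matrix (Fin m) (Fin m) ℂ →ₗ[ℝ] Matrix (Fin m) (Fin m) ℂ,
      Set.EqOn (⇑L) W Q := by
  classical
  obtain ⟨B, hBQ, hspan, hli⟩ := exists_linearIndependent ℝ Q
  have hBfin : B.Finite := hfin.subset hBQ
  set s : Finset (Matrix (Fin m) (Fin m) ℂ) := hBfin.toFinset with hs_def
  have hsB : (s : Set (Matrix (Fin m) (Fin m) ℂ)) = B := hBfin.coe_toFinset
  -- extend B to a basis of the whole space
  let bas := Module.Basis.extend hli
  let L : Matrix (Fin m) (Fin m) ℂ →ₗ[ℝ] Matrix (Fin m) (Fin m) ℂ :=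
    bas.constr ℝ (fun x => if (x : Matrix (Fin m) (Fin m) ℂ) ∈ Q then W x else 0)
  have hLB : ∀ b ∈ B, L b = W b := by
    intro b hb
    have hbmem : b ∈ (show LinearIndepOn ℝ id B from hli).extend (Set.subset_univ B) :=
      LinearIndepOn.subset_extend (show LinearIndepOn ℝ id B from hli) (Set.subset_univ B) hb
    have : bas ⟨b, hbmem⟩ = b := Module.Basis.extend_apply_self hli ⟨b, hbmem⟩
    have hc := bas.constr_basis ℝ
      (fun x => if (x : Matrix (Fin m) (Fin m) ℂ) ∈ Q then W x else 0) ⟨b, hbmem⟩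
    rw [this] at hc
    rw [hc]
    simp [hBQ hb]
  refine ⟨L, fun q hq => ?_⟩
  -- represent q as a combination of elements of s
  have hqspan : q ∈ Submodule.span ℝ B := by
    rw [hspan]; exact Submodule.subset_span hq
  rw [← hsB] at hqspan
  obtain ⟨f, -, hf⟩ := Submodule.mem_span_finset.mp hqspan
  have hLq : L q = ∑ b ∈ s, f b • W b := by
    rw [← hf, map_sum]
    refine Finset.sum_congr rfl fun b hb => ?_
    rw [L.map_smul, hLB b (by rw [← hsB]; exact_mod_cast hb)]
  -- the difference D
  set D : Matrix (Fin m) (Fin m) ℂ := W q - ∑ b ∈ s, f b • W b with hD_def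
  -- combined coefficients over t = insert q s
  set t : Finset (Matrix (Fin m) (Fin m) ℂ) := insert q s with ht_def
  set g : Matrix (Fin m) (Fin m) ℂ → ℝ :=
    fun x => (if x = q then 1 else 0) - (if x ∈ s then f x else 0) with hg_def
  have hcomb : ∀ v : Matrix (Fin m) (Fin m) ℂ → Matrix (Fin m) (Fin m) ℂ,
      ∑ x ∈ t, g x • v x = v q - ∑ x ∈ s, f x • v x := by
    intro v
    have h1 : ∑ x ∈ t, (if x = q then (1 : ℝ) else 0) • v x = v q := by
      rw [Finset.sum_eq_single q]
      · simp
      · intro x _ hxq; simp [hxq]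
      · intro hqt; exact absurd (Finset.mem_insert_self q s) hqt
    have h2 : ∑ x ∈ t, (if x ∈ s then f x else 0) • v x = ∑ x ∈ s, f x • v x := by
      rw [ht_def, Finset.sum_insert_of_eq_zero_if_notMem]
      · exact Finset.sum_congr rfl fun x hx => by simp [hx]
      · intro hqs; simp [hqs]
    calc ∑ x ∈ t, g x • v x
        = ∑ x ∈ t, ((if x = q then (1 : ℝ) else 0) • v x
            - (if x ∈ s then f x else 0) • v x) := by
          refine Finset.sum_congr rfl fun x _ => ?_
          rw [hg_def, sub_smul]
      _ = v q - ∑ x ∈ s, f x • v x := by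
          rw [Finset.sum_sub_distrib, h1, h2]
  have htQ : ↑t ⊆ Q := by
    rw [ht_def]
    intro x hx
    rcases Finset.mem_insert.mp hx with h | h
    · rwa [h]
    · exact hBQ (by rw [← hsB]; exact_mod_cast h)
  -- trace of D² is zero
  have htr : (D * D).trace = 0 := by
    have h0 : ∑ x ∈ t, g x • x = 0 := by
      rw [hcomb (fun x => x), hf]; exact sub_self q
    have hDt : ∑ x ∈ t, g x • W x = D := by rw [hcomb W, hD_def]
    have := trace_sum_sq_eq Q W hW t htQ g
    rw [hDt, h0] at this
    simpa using this
  -- D is Hermitian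
  have hDherm : D.IsHermitian := by
    have h1 : (W q).IsHermitian := hQ _ (hbij.mapsTo hq)
    have h2 : (∑ b ∈ s, f b • W b).IsHermitian := by
      rw [Matrix.IsHermitian, Matrix.conjTranspose_sum]
      refine Finset.sum_congr rfl fun b hb => ?_
      have hbQ : b ∈ Q := hBQ (by rw [← hsB]; exact_mod_cast hb)
      rw [Matrix.conjTranspose_smul, (hQ _ (hbij.mapsTo hbQ)).eq]
      simp
    exact h1.sub h2
  have hDzero : D = 0 := herm_trace_sq_eq_zero hDherm htr
  have : W q = ∑ b ∈ s, f b • W b := by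
    have := sub_eq_zero.mp hDzero
    exact this
  rw [hLq, ← this]
end
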